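/- Let O = {o1, o2, o3, o4} with A = {a1, a2}, and define the rule φ that assigns a1 her most-preferred object and assigns a2 her most-preferred object among the two objects least-preferred by a1. Then φ is strategy-proof. -/

import Mathlib

open Classical

/-- A rule is strategy-proof. (Larger in the linear order means more preferred.) -/
def StrategyProof {A O : Type*} [DecidableEq A] (φ : (A → LinearOrder O) → A → O) : Prop :=
  ∀ (P : A → LinearOrder O) (a : A) (Q : LinearOrder O),
    (P a).le (φ (Function.update P a Q) a) (φ P a)

/-- The maximum of `s` under the linear order `L` (an arbitrary default if `s = ∅`). -/
noncomputable def topOf {α : Type*} (L : LinearOrder α) (s : Finset α) (d : α) : α :=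
  WithBot.unbotD d (@Finset.max α L s)

/-- The two least-preferred objects under `L`: those with at least two objects
strictly preferred to them. -/
noncomputable def bottomTwo (L : LinearOrder (Fin 4)) : Finset (Fin 4) :=
  Finset.univ.filter fun o => 2 ≤ (Finset.univ.filter fun o' => L.lt o o').card

/-- Two agents `0 = a1`, `1 = a2`; four objects.  `a1` gets her most-preferred
object; `a2` gets her most-preferred object among the two objects
least-preferred by `a1`. -/
noncomputable def phiTwo (P : Fin 2 → LinearOrder (Fin 4)) : Fin 2 → Fin 4 := fun a =>
  if a = 0 then topOf (P 0) Finset.univ 0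
  else topOf (P 1) (bottomTwo (P 0)) 0

lemma topOf_mem {α : Type*} (L : LinearOrder α) (s : Finset α) (d : α)
    (hs : s.Nonempty) : topOf L s d ∈ s := by
  obtain ⟨m, hm⟩ := @Finset.max_of_nonempty α L s hs
  unfold topOf
  rw [hm]
  exact @Finset.mem_of_max α L s m hm

lemma le_topOf {α : Type*} (L : LinearOrder α) (s : Finset α) (d : α)
    {a : α} (ha : a ∈ s) : L.le a (topOf L s d) := by
  obtain ⟨m, hm⟩ := @Finset.max_of_nonempty α L s ⟨a, ha⟩
  have := @Finset.le_max α L a s ha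
  rw [hm] at this
  unfold topOf
  rw [hm]
  exact_mod_cast this

lemma bottomTwo_nonempty (L : LinearOrder (Fin 4)) : (bottomTwo L).Nonempty := by
  obtain ⟨m, hm⟩ := @Finset.min_of_nonempty (Fin 4) L Finset.univ ⟨0, Finset.mem_univ 0⟩
  refine ⟨m, ?_⟩
  unfold bottomTwo
  rw [Finset.mem_filter]
  refine ⟨Finset.mem_univ m, ?_⟩
  have hsub : Finset.univ.erase m ⊆ Finset.univ.filter fun o' => L.lt m o' := by
    intro x hx
    rw [Finset.mem_erase] at hx
    rw [Finset.mem_filter]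
    refine ⟨Finset.mem_univ x, ?_⟩
    have hle : L.le m x := @Finset.min_le_of_eq (Fin 4) L _ _ _ (Finset.mem_univ x) hm
    exact @lt_of_le_of_ne _ L.toPartialOrder m x hle (Ne.symm hx.1)
  have := Finset.card_le_card hsub
  have hcard : (Finset.univ.erase m).card = 3 := by
    rw [Finset.card_erase_of_mem (Finset.mem_univ m)]
    simp
  omega

/-- The rule `φ` is strategy-proof. -/
theorem phiTwo_strategyProof : StrategyProof phiTwo := by
  intro P a Q
  have ha : a = 0 ∨ a = 1 := by omega
  rcases ha with rfl | rfl
  · simp only [phiTwo, if_pos rfl, Function.update_self]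
    exact le_topOf (P 0) Finset.univ 0 (topOf_mem Q Finset.univ 0 ⟨0, Finset.mem_univ 0⟩)
  · have h10 : (1 : Fin 2) ≠ 0 := by decide
    simp only [phiTwo, if_neg h10]
    rw [Function.update_self, Function.update_of_ne (by decide : (0 : Fin 2) ≠ 1)]
    exact le_topOf (P 1) (bottomTwo (P 0)) 0
      (topOf_mem Q (bottomTwo (P 0)) 0 (bottomTwo_nonempty (P 0)))
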